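/- Let χ ∈ P be a Jacobi element with induced map X(f) = {χ,f}. Then for every homogeneous f ∈ A the graded commutator of X with the Hamiltonian vector field X_f satisfies [X, X_f] = (-1)^{|χ|} X_{X(f)}; explicitly, X(X_f(g)) - (-1)^{|χ|(|f|+1)} X_f(X(g)) = (-1)^{|χ|} X_{X(f)}(g) for all g ∈ A. (This is the implication (1) ⟹ (3) of the lemma characterising Jacobi vector fields on an odd Jacobi manifold.) -/

import Mathlib

noncomputable section

/-- The sign `(-1)^i` for a parity `i : ZMod 2`. -/
def zsign (i : ZMod 2) : ℝ := if i = 0 then 1 else -1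

/-- A Poisson superalgebra: a unital associative `ℝ`-algebra `P` with a `ℤ/2`-grading
`P = P₀ ⊕ P₁` which is graded-commutative, equipped with an `ℝ`-bilinear, parity-preserving
bracket satisfying graded antisymmetry, the graded Leibniz rule and the graded Jacobi
identity (for homogeneous elements). -/
structure PoissonSuperalgebra (P : Type*) [Ring P] [Algebra ℝ P] where
  grade : ZMod 2 → Submodule ℝ P
  sup_grade : grade 0 ⊔ grade 1 = ⊤
  inf_grade : grade 0 ⊓ grade 1 = ⊥
  one_mem : (1 : P) ∈ grade 0
  mul_mem : ∀ {i j : ZMod 2} {a b : P}, a ∈ grade i → b ∈ grade j → a * b ∈ grade (i + j)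
  super_comm : ∀ {i j : ZMod 2} {a b : P}, a ∈ grade i → b ∈ grade j →
    a * b = zsign (i * j) • (b * a)
  bracket : P →ₗ[ℝ] P →ₗ[ℝ] P
  bracket_mem : ∀ {i j : ZMod 2} {a b : P}, a ∈ grade i → b ∈ grade j →
    bracket a b ∈ grade (i + j)
  bracket_antisymm : ∀ {i j : ZMod 2} {a b : P}, a ∈ grade i → b ∈ grade j →
    bracket a b = -(zsign (i * j) • bracket b a)
  bracket_leibniz : ∀ {i j k : ZMod 2} {a b c : P}, a ∈ grade i → b ∈ grade j →
    c ∈ grade k → bracket a (b * c) = bracket a b * c + zsign (i * j) • (b * bracket a c)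
  bracket_jacobi : ∀ {i j k : ZMod 2} {a b c : P}, a ∈ grade i → b ∈ grade j →
    c ∈ grade k →
    bracket a (bracket b c) = bracket (bracket a b) c + zsign (i * j) • bracket b (bracket a c)

variable {P : Type*} [Ring P] [Algebra ℝ P]

/-- The odd Jacobi bracket `[f,g]_J` associated to an odd Jacobi structure `(S, Q)`,
for `f` homogeneous of parity `i`:
`[f,g]_J = (-1)^{|f|+1} {{S,f},g} - (-1)^{|f|+1} {Q, f g}`. -/
def oddJacobiBracket (psa : PoissonSuperalgebra P) (S Q : P) (i : ZMod 2) (f g : P) : P :=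
  zsign (i + 1) • psa.bracket (psa.bracket S f) g - zsign (i + 1) • psa.bracket Q (f * g)

/-- The Hamiltonian vector field of a homogeneous `f` of parity `i`, acting on `g`:
`X_f(g) = (-1)^{|f|} [f,g]_J - {Q,f}·g`. -/
def hamiltonianVF (psa : PoissonSuperalgebra P) (S Q : P) (i : ZMod 2) (f g : P) : P :=
  zsign i • oddJacobiBracket psa S Q i f g - psa.bracket Q f * g

/-- For homogeneous `f` and `g`, the Hamiltonian vector field simplifies using the
Leibniz rule. -/
lemma hamVF_eq (psa : PoissonSuperalgebra P) {S Q : P} (hQ : Q ∈ psa.grade 1)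
    {i j : ZMod 2} {f g : P} (hfi : f ∈ psa.grade i) (hgj : g ∈ psa.grade j) :
    hamiltonianVF psa S Q i f g
      = zsign i • (f * psa.bracket Q g) - psa.bracket (psa.bracket S f) g := by
  unfold hamiltonianVF oddJacobiBracket
  rw [psa.bracket_leibniz hQ hfi hgj]
  have h1 : (1 : ZMod 2) * i = i := one_mul i
  rw [h1]
  fin_cases i <;>
    simp [zsign, show ((⟨0, by decide⟩ : Fin 2) : ZMod 2) = (0 : ZMod 2) from rfl, show ((⟨1, by decide⟩ : Fin 2) : ZMod 2) = (1 : ZMod 2) from rfl, show ((0:ZMod 2) + 1) = 1 by decide, show ((1:ZMod 2) + 1) = 0 by decide] <;>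
    module

/-- `hamiltonianVF` is additive in its last argument. -/
lemma hamVF_add (psa : PoissonSuperalgebra P) (S Q : P) (i : ZMod 2) (f g₀ g₁ : P) :
    hamiltonianVF psa S Q i f (g₀ + g₁)
      = hamiltonianVF psa S Q i f g₀ + hamiltonianVF psa S Q i f g₁ := by
  simp only [hamiltonianVF, oddJacobiBracket, mul_add, map_add, smul_add]
  module

/-- The key computation for homogeneous `g`. -/
lemma jacobi_key (psa : PoissonSuperalgebra P) {S Q : P}
    (hS : S ∈ psa.grade 1) (hQ : Q ∈ psa.grade 1)
    {c : ZMod 2} {χ : P} (hχ : χ ∈ psa.grade c)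
    (hχS : psa.bracket χ S = 0) (hχQ : psa.bracket χ Q = 0)
    {i j : ZMod 2} {f g : P} (hfi : f ∈ psa.grade i) (hgj : g ∈ psa.grade j) :
    psa.bracket χ (hamiltonianVF psa S Q i f g)
      - zsign (c * (i + 1)) • hamiltonianVF psa S Q i f (psa.bracket χ g)
      = zsign c • hamiltonianVF psa S Q (c + i) (psa.bracket χ f) g := by
  have hSf := psa.bracket_mem hS hfi
  have hχf := psa.bracket_mem hχ hfi
  have hχg := psa.bracket_mem hχ hgj
  have hQg := psa.bracket_mem hQ hgj
  rw [hamVF_eq psa hQ hfi hgj, hamVF_eq psa hQ hfi hχg, hamVF_eq psa hQ hχf hgj]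
  rw [map_sub, map_smul]
  rw [psa.bracket_leibniz hχ hfi hQg]
  rw [psa.bracket_jacobi hχ hQ hgj, hχQ]
  rw [psa.bracket_jacobi hχ hSf hgj]
  rw [psa.bracket_jacobi hχ hS hfi, hχS]
  simp only [map_zero, LinearMap.zero_apply, zero_add, mul_one]
  fin_cases c <;> fin_cases i <;> fin_cases j <;>
    simp [zsign, show ((⟨0, by decide⟩ : Fin 2) : ZMod 2) = (0 : ZMod 2) from rfl, show ((⟨1, by decide⟩ : Fin 2) : ZMod 2) = (1 : ZMod 2) from rfl, show ((0:ZMod 2) + 1) = 1 by decide, show ((1:ZMod 2) + 1) = 0 by decide] <;>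
    module

/-- (1) ⟹ (3) of the lemma on Jacobi vector fields: for a Jacobi element `χ` with induced
map `X = {χ,·}`, the graded commutator satisfies `[X, X_f] = (-1)^{|χ|} X_{X(f)}`:
`X(X_f(g)) - (-1)^{|χ|(|f|+1)} X_f(X(g)) = (-1)^{|χ|} X_{X(f)}(g)`. -/
theorem jacobiElement_hamiltonian_commutator
    (psa : PoissonSuperalgebra P) (A : Subalgebra ℝ P) (S Q : P)
    (hA_graded : ∀ a ∈ A, ∃ a₀ a₁ : P, a₀ ∈ A ∧ a₀ ∈ psa.grade 0 ∧
      a₁ ∈ A ∧ a₁ ∈ psa.grade 1 ∧ a = a₀ + a₁)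
    (hA_bracket : ∀ f ∈ A, ∀ g ∈ A, psa.bracket f g = 0)
    (hS : S ∈ psa.grade 1) (hQ : Q ∈ psa.grade 1)
    (hQQ : psa.bracket Q Q = 0) (hQS : psa.bracket Q S = 0)
    (hSS : psa.bracket S S = -((2 : ℝ) • (Q * S)))
    (hQA : ∀ f ∈ A, psa.bracket Q f ∈ A)
    (hSA : ∀ f ∈ A, ∀ g ∈ A, psa.bracket (psa.bracket S f) g ∈ A)
    {c : ZMod 2} {χ : P} (hχ : χ ∈ psa.grade c)
    (hχS : psa.bracket χ S = 0) (hχQ : psa.bracket χ Q = 0)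
    (hχA : ∀ a ∈ A, psa.bracket χ a ∈ A)
    {i : ZMod 2} {f g : P} (hf : f ∈ A) (hfi : f ∈ psa.grade i) (hg : g ∈ A) :
    psa.bracket χ (hamiltonianVF psa S Q i f g)
      - zsign (c * (i + 1)) • hamiltonianVF psa S Q i f (psa.bracket χ g)
      = zsign c • hamiltonianVF psa S Q (c + i) (psa.bracket χ f) g := by
  obtain ⟨g₀, g₁, hg₀A, hg₀, hg₁A, hg₁, rfl⟩ := hA_graded g hg
  have e0 := jacobi_key psa hS hQ hχ hχS hχQ hfi hg₀
  have e1 := jacobi_key psa hS hQ hχ hχS hχQ hfi hg₁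
  rw [map_add, hamVF_add psa S Q i f g₀ g₁, map_add,
    hamVF_add psa S Q i f (psa.bracket χ g₀) (psa.bracket χ g₁),
    hamVF_add psa S Q (c + i) (psa.bracket χ f) g₀ g₁,
    smul_add, smul_add, ← e0, ← e1]
  abel
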